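/- Let r ∈ (0,1], a ≥ 0, and fix x with (1−√r)² < x < (1+√r)². Then lim_{t → ∞} t·ρ(tx; r, t, a) = √((x − (1−√r)²)((1+√r)² − x))/(2πrx), i.e. in the long-term limit the suitably rescaled three-parametric Marcenko–Pastur density converges pointwise to the original Marcenko–Pastur density ρ(x;r). -/

import Mathlib

open Filter Topology

/-- The real cube root. -/
noncomputable def cbrt (y : ℝ) : ℝ :=
  if 0 ≤ y then y ^ ((1 : ℝ)/3) else -((-y) ^ ((1 : ℝ)/3))

/-- The cubic polynomial `S(x; r, t, a)`. -/
noncomputable def S (x r t a : ℝ) : ℝ :=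
  4*a*x^3 - (8*a^2 + 4*a*(3*r+2)*t - t^2)*x^2
    + 2*(2*a^3 - 2*a^2*(5*r-2)*t + a*(r*(6*r-1)+1)*t^2 - (r+1)*t^3)*x
    + (r-1)^2*t^2*(a^2 - a*(4*r-2)*t + t^2)

/-- The function `g(x; r, t, a)`. -/
noncomputable def g (x r t a : ℝ) : ℝ :=
  -2*x^3 + 3*((2*r+1)*t + 6*a)*x^2
    - 3*((r-1)*((2*r+1)*t - 3*a)*t - Real.sqrt (-3 * S x r t a))*x
    + 2*(r-1)^3*t^3

/-- The function `φ(x; r, t, a)`. -/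
noncomputable def phi (x r t a : ℝ) : ℝ :=
  -(2/3)*(x - (r-1)*t)
    - (cbrt 2 / 3) * ((x^2 + (3*a - (2*r+1)*t)*x + (r-1)^2*t^2) / cbrt (g x r t a))
    - cbrt (g x r t a) / (3 * cbrt 2)

/-- The function `D(x; r, t, a) = -4aφ + (t-a)²`. -/
noncomputable def Df (x r t a : ℝ) : ℝ := -4*a*phi x r t a + (t-a)^2

/-- The three-parametric Marcenko–Pastur density `ρ(x; r, t, a)`. -/
noncomputable def rho (x r t a : ℝ) : ℝ :=
  Real.sqrt (2*(t - a + Real.sqrt (Df x r t a))*x - (phi x r t a)^2)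
    / (2*Real.pi*r*t*x)

/-- The real part `R(x; r, t, a)` of the boundary value of the Green's function. -/
noncomputable def Rf (x r t a : ℝ) : ℝ :=
  (2*x + (r-1)*t)/(3*r*t*x)
    - (x^2 + (3*a - (2*r+1)*t)*x + (r-1)^2*t^2) / (3 * (cbrt 2)^2 * r * t * cbrt (g x r t a) * x)
    - cbrt (g x r t a) / (6 * cbrt 2 * r * t * x)

/- ### Auxiliary lemmas for `stmt_18` -/

lemma cbrt_nonneg_eq {y : ℝ} (hy : 0 ≤ y) : cbrt y = y ^ ((1:ℝ)/3) := if_pos hy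

lemma cbrt_mul_nonneg {x : ℝ} (hx : 0 ≤ x) (y : ℝ) : cbrt (x * y) = cbrt x * cbrt y := by
  rcases le_or_gt 0 y with hy | hy
  · rw [cbrt_nonneg_eq (mul_nonneg hx hy), cbrt_nonneg_eq hx, cbrt_nonneg_eq hy,
      Real.mul_rpow hx hy]
  · rcases eq_or_lt_of_le hx with h0 | hx'
    · simp [cbrt, ← h0, Real.zero_rpow (by norm_num : (1:ℝ)/3 ≠ 0)]
    · have hxy : ¬ (0 ≤ x * y) := not_le.2 (mul_neg_of_pos_of_neg hx' hy)
      rw [cbrt, if_neg hxy, cbrt_nonneg_eq hx, cbrt, if_neg (not_le.2 hy)]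
      rw [show -(x*y) = x * (-y) by ring, Real.mul_rpow hx (by linarith)]
      ring

lemma cbrt_cube {t : ℝ} (ht : 0 ≤ t) : cbrt (t^3) = t := by
  rw [cbrt_nonneg_eq (by positivity), ← Real.rpow_natCast t 3, ← Real.rpow_mul ht]
  norm_num

lemma cbrt_cube_mul {t : ℝ} (ht : 0 ≤ t) (y : ℝ) : cbrt (t^3 * y) = t * cbrt y := by
  rw [cbrt_mul_nonneg (by positivity), cbrt_cube ht]

lemma cbrt_pos {y : ℝ} (hy : 0 < y) : 0 < cbrt y := by
  rw [cbrt_nonneg_eq hy.le]; positivity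

lemma continuousAt_cbrt_pos {y : ℝ} (hy : 0 < y) : ContinuousAt cbrt y := by
  have h : ContinuousAt (fun z : ℝ => z ^ ((1:ℝ)/3)) y :=
    Real.continuousAt_rpow_const y _ (Or.inl hy.ne')
  refine h.congr ?_
  filter_upwards [lt_mem_nhds hy] with z hz
  exact (cbrt_nonneg_eq hz.le).symm

lemma S_hom (x r b t : ℝ) : S (t*x) r t (t*b) = t^4 * S x r 1 b := by
  unfold S; ring

lemma g_hom (x r b t : ℝ) (ht : 0 ≤ t) : g (t*x) r t (t*b) = t^3 * g x r 1 b := by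
  unfold g
  rw [show -3 * S (t*x) r t (t*b) = (t^2)^2 * (-3 * S x r 1 b) by rw [S_hom]; ring,
    Real.sqrt_mul (sq_nonneg _), Real.sqrt_sq (sq_nonneg t)]
  ring

lemma phi_hom (x r b t : ℝ) (ht : 0 < t) : phi (t*x) r t (t*b) = t * phi x r 1 b := by
  unfold phi
  rw [g_hom x r b t ht.le, cbrt_cube_mul ht.le]
  rw [show (t*x)^2 + (3*(t*b) - (2*r+1)*t)*(t*x) + (r-1)^2*t^2
      = t * (t * (x^2 + (3*b - (2*r+1)*1)*x + (r-1)^2*1^2)) by ring]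
  rw [mul_div_mul_left _ _ ht.ne']
  ring

lemma Df_hom (x r b t : ℝ) (ht : 0 < t) : Df (t*x) r t (t*b) = t^2 * Df x r 1 b := by
  unfold Df; rw [phi_hom x r b t ht]; ring

lemma rho_hom (x r b t : ℝ) (ht : 0 < t) (hx : 0 < x) (hr : 0 < r) :
    t * rho (t*x) r t (t*b) = rho x r 1 b := by
  unfold rho
  rw [Df_hom x r b t ht, phi_hom x r b t ht,
    Real.sqrt_mul (sq_nonneg t), Real.sqrt_sq ht.le]
  rw [show 2*(t - t*b + t * Real.sqrt (Df x r 1 b))*(t*x) - (t * phi x r 1 b)^2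
      = t^2 * (2*(1 - b + Real.sqrt (Df x r 1 b))*x - (phi x r 1 b)^2) by ring,
    Real.sqrt_mul (sq_nonneg t), Real.sqrt_sq ht.le]
  field_simp [Real.pi_ne_zero, hr.ne', hx.ne', ht.ne']

lemma rho_val0 (r x : ℝ) (hr : 0 < r) (hr1 : r ≤ 1)
    (hx1 : (1 - Real.sqrt r)^2 < x) (hx2 : x < (1 + Real.sqrt r)^2) :
    0 < g x r 1 0 ∧ rho x r 1 0
      = Real.sqrt ((x - (1 - Real.sqrt r)^2) * ((1 + Real.sqrt r)^2 - x)) / (2*Real.pi*r*x) := by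
  have hx0 : 0 < x := lt_of_le_of_lt (sq_nonneg _) hx1
  have hrs : (Real.sqrt r)^2 = r := Real.sq_sqrt hr.le
  have hSneg : 0 < -3 * S x r 1 0 := by
    have h1 : 0 < (x - (1 - Real.sqrt r)^2) * ((1 + Real.sqrt r)^2 - x) :=
      mul_pos (by linarith) (by linarith)
    have : -3 * S x r 1 0 = 3 * ((x - (1 - Real.sqrt r)^2) * ((1 + Real.sqrt r)^2 - x)) := by
      unfold S
      linear_combination (-(6*x+6-3*(Real.sqrt r)^2-3*r)) * hrs
    linarith
  set A : ℝ := x + 1 - r with hAdef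
  set B : ℝ := Real.sqrt (-3 * S x r 1 0) with hBdef
  have hB2 : B^2 = -3 * S x r 1 0 := Real.sq_sqrt hSneg.le
  have hBpos : 0 < B := Real.sqrt_pos.2 hSneg
  have hA : 0 < A := by
    simp only [hAdef]; nlinarith
  set u : ℝ := (A + B)/2 with hudef
  have hu : 0 < u := by positivity
  have hS0 : S x r 1 0 = x^2 - 2*(r+1)*x + (r-1)^2 := by unfold S; ring
  have hB2' : B^2 = -3*(x^2 - 2*(r+1)*x + (r-1)^2) := by rw [hB2, hS0]
  have hG : g x r 1 0 = 2*u^3 := by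
    unfold g
    rw [← hBdef, hudef, hAdef]
    linear_combination (-(B+3*(x+1-r))/4) * hB2'
  have hGpos : 0 < g x r 1 0 := by rw [hG]; positivity
  have hcbrtG : cbrt (g x r 1 0) = cbrt 2 * u := by
    rw [hG, cbrt_mul_nonneg (by norm_num), cbrt_cube hu.le]
  have hc2 : 0 < cbrt 2 := cbrt_pos (by norm_num)
  have hP : x^2 + (3*0 - (2*r+1)*1)*x + (r-1)^2*1^2 = A*u - u^2 := by
    rw [hudef, hAdef]
    linear_combination ((1:ℝ)/4) * hB2'
  have hphi0 : phi x r 1 0 = -A := by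
    unfold phi
    rw [hcbrtG, hP]
    field_simp
    ring
  have hDf0 : Df x r 1 0 = 1 := by unfold Df; ring
  refine ⟨hGpos, ?_⟩
  unfold rho
  rw [hDf0, Real.sqrt_one, hphi0]
  rw [show 2*(1 - 0 + 1)*x - (-A)^2 = (x - (1 - Real.sqrt r)^2) * ((1 + Real.sqrt r)^2 - x) by
    rw [hAdef]; linear_combination (-(2*x+2-r-(Real.sqrt r)^2)) * hrs]
  norm_num

lemma rho_contAt0 (r x : ℝ) (hr : 0 < r) (hx0 : 0 < x) (hGpos : 0 < g x r 1 0) :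
    ContinuousAt (fun b => rho x r 1 b) 0 := by
  have hSc : Continuous fun b => S x r 1 b := by unfold S; continuity
  have hgc : Continuous fun b => g x r 1 b := by
    unfold g
    continuity
  have hcG : ContinuousAt (fun b => cbrt (g x r 1 b)) 0 :=
    (continuousAt_cbrt_pos hGpos).comp hgc.continuousAt
  have hcGne : cbrt (g x r 1 0) ≠ 0 := (cbrt_pos hGpos).ne'
  have hPc : Continuous fun b : ℝ => x^2 + (3*b - (2*r+1)*1)*x + (r-1)^2*1^2 := by continuity
  have hphic : ContinuousAt (fun b => phi x r 1 b) 0 := by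
    unfold phi
    exact (continuousAt_const.sub (continuousAt_const.mul
      (hPc.continuousAt.div hcG hcGne))).sub (hcG.div continuousAt_const
        (mul_pos (by norm_num) (cbrt_pos (by norm_num : (0:ℝ) < 2))).ne')
  have hDfc : ContinuousAt (fun b => Df x r 1 b) 0 := by
    unfold Df
    exact ((continuousAt_const.mul continuousAt_id).mul hphic).add
      ((continuousAt_const.sub continuousAt_id).pow 2)
  have hnum : ContinuousAt (fun b => Real.sqrt (2*(1 - b + Real.sqrt (Df x r 1 b))*x
      - (phi x r 1 b)^2)) 0 := by
    apply Real.continuous_sqrt.continuousAt.comp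
    exact ((continuousAt_const.mul ((continuousAt_const.sub continuousAt_id).add
      (Real.continuous_sqrt.continuousAt.comp hDfc))).mul continuousAt_const).sub
      (hphic.pow 2)
  unfold rho
  exact hnum.div continuousAt_const (by positivity)

theorem stmt_18 (r a x : ℝ) (hr : 0 < r) (hr1 : r ≤ 1) (ha : 0 ≤ a)
    (hx1 : (1 - Real.sqrt r)^2 < x) (hx2 : x < (1 + Real.sqrt r)^2) :
    Filter.Tendsto (fun t : ℝ => t * rho (t*x) r t a) Filter.atTop
      (nhds (Real.sqrt ((x - (1 - Real.sqrt r)^2) * ((1 + Real.sqrt r)^2 - x))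
        / (2*Real.pi*r*x))) := by
  have hx0 : 0 < x := lt_of_le_of_lt (sq_nonneg _) hx1
  obtain ⟨hGpos, hval⟩ := rho_val0 r x hr hr1 hx1 hx2
  have hcont : ContinuousAt (fun b => rho x r 1 b) 0 := rho_contAt0 r x hr hx0 hGpos
  have hlim : Filter.Tendsto (fun t : ℝ => a / t) Filter.atTop (nhds 0) := by
    simpa [div_eq_mul_inv] using tendsto_inv_atTop_zero.const_mul a
  have h1 : Filter.Tendsto (fun t : ℝ => rho x r 1 (a/t)) Filter.atTop
      (nhds (rho x r 1 0)) := hcont.tendsto.comp hlim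
  rw [hval] at h1
  refine Filter.Tendsto.congr' ?_ h1
  filter_upwards [Filter.eventually_gt_atTop (0:ℝ)] with t ht
  have h2 := rho_hom x r (a/t) t ht hx0 hr
  rw [show t * (a/t) = a by field_simp] at h2
  exact h2.symm
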